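/- Let λ > 0, a > 0, V∞ ∈ (0,1), and set α := 2V∞/(λa²), β := 2(1−V∞)/(λa²). For any constant C > 0, the function f(v) := C·v^(α−1)·(1−v)^(β−1) satisfies, for every v ∈ (0,1), the stationary Fokker–Planck equation (λ/2)·d²/dv²[a²·v(1−v)·f(v)] − d/dv[(V∞ − v)·f(v)] = 0. -/

import Mathlib

/-- Derivative of `v ^ p * (1 - v) ^ q` on `(0,1)`. -/
lemma hasDerivAt_FF (p q v : ℝ) (h0 : 0 < v) (h1 : v < 1) :
    HasDerivAt (fun w : ℝ => w ^ p * (1 - w) ^ q)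
      (p * v ^ (p - 1) * (1 - v) ^ q - q * v ^ p * (1 - v) ^ (q - 1)) v := by
  have hne : v ≠ 0 := h0.ne'
  have hne1 : (1 : ℝ) - v ≠ 0 := by intro h; nlinarith
  have d1 : HasDerivAt (fun w : ℝ => w ^ p) (p * v ^ (p - 1)) v :=
    Real.hasDerivAt_rpow_const (Or.inl hne)
  have dl : HasDerivAt (fun w : ℝ => 1 - w) (-1) v := by
    exact (hasDerivAt_id' v).const_sub 1
  have d2 : HasDerivAt (fun w : ℝ => (1 - w) ^ q) (q * (1 - v) ^ (q - 1) * (-1)) v :=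
    (Real.hasDerivAt_rpow_const (p := q) (Or.inl hne1)).comp v dl
  have := d1.mul d2
  exact this.congr_deriv (by ring)

/-- The beta-type profile solves the stationary Fokker–Planck equation on (0,1). -/
theorem beta_solves_stationary_FokkerPlanck
    (lam a Vinf C : ℝ) (hlam : 0 < lam) (ha : 0 < a)
    (hVinf : Vinf ∈ Set.Ioo (0:ℝ) 1) (hC : 0 < C)
    (α β : ℝ) (hα : α = 2 * Vinf / (lam * a ^ 2)) (hβ : β = 2 * (1 - Vinf) / (lam * a ^ 2))
    (f : ℝ → ℝ) (hf : ∀ v, f v = C * v ^ (α - 1) * (1 - v) ^ (β - 1)) :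
    ∀ v ∈ Set.Ioo (0:ℝ) 1,
      (lam / 2) * deriv (deriv (fun v => a ^ 2 * v * (1 - v) * f v)) v
        - deriv (fun v => (Vinf - v) * f v) v = 0 := by
  intro v hv
  obtain ⟨hv0, hv1⟩ := hv
  have hne : v ≠ 0 := hv0.ne'
  have hne1 : (1 : ℝ) - v ≠ 0 := by intro h; nlinarith
  -- the formula for deriv g on (0,1)
  have hderivg : ∀ w ∈ Set.Ioo (0:ℝ) 1,
      deriv (fun v => a ^ 2 * v * (1 - v) * f v) w
        = (a ^ 2 * C * α) * (w ^ (α - 1) * (1 - w) ^ β)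
          - (a ^ 2 * C * β) * (w ^ α * (1 - w) ^ (β - 1)) := by
    intro w hw
    obtain ⟨hw0, hw1⟩ := hw
    have hwne : w ≠ 0 := hw0.ne'
    have hwne1 : (1 : ℝ) - w ≠ 0 := by intro h; nlinarith
    have heq : (fun v => a ^ 2 * v * (1 - v) * f v)
        =ᶠ[nhds w] fun u => (a ^ 2 * C) * (u ^ α * (1 - u) ^ β) := by
      filter_upwards [Ioo_mem_nhds hw0 hw1] with u hu
      obtain ⟨hu0, hu1⟩ := hu
      have hune : u ≠ 0 := hu0.ne'
      have hune1 : (1 : ℝ) - u ≠ 0 := by intro h; nlinarith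
      rw [hf u, show α = (α - 1) + 1 by ring, show β = (β - 1) + 1 by ring,
        Real.rpow_add_one hune, Real.rpow_add_one hune1]
      ring
    rw [heq.deriv_eq]
    have := ((hasDerivAt_FF α β w hw0 hw1).const_mul (a ^ 2 * C)).deriv
    rw [this]
    ring
  -- second derivative
  have heq2 : deriv (fun v => a ^ 2 * v * (1 - v) * f v)
      =ᶠ[nhds v] fun w => (a ^ 2 * C * α) * (w ^ (α - 1) * (1 - w) ^ β)
          - (a ^ 2 * C * β) * (w ^ α * (1 - w) ^ (β - 1)) := by
    filter_upwards [Ioo_mem_nhds hv0 hv1] with w hw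
    exact hderivg w hw
  have dd := ((hasDerivAt_FF (α - 1) β v hv0 hv1).const_mul (a ^ 2 * C * α)).sub
    ((hasDerivAt_FF α (β - 1) v hv0 hv1).const_mul (a ^ 2 * C * β))
  rw [heq2.deriv_eq]; erw [dd.deriv]
  -- derivative of (Vinf - v) * f
  have df : HasDerivAt f
      (C * ((α - 1) * v ^ (α - 1 - 1) * (1 - v) ^ (β - 1)
        - (β - 1) * v ^ (α - 1) * (1 - v) ^ (β - 1 - 1))) v := by
    have hfe : f = fun u => C * (u ^ (α - 1) * (1 - u) ^ (β - 1)) := by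
      funext u; rw [hf u]; ring
    rw [hfe]
    exact (hasDerivAt_FF (α - 1) (β - 1) v hv0 hv1).const_mul C
  have dV : HasDerivAt (fun u : ℝ => Vinf - u) (-1) v := by
    exact (hasDerivAt_id' v).const_sub Vinf
  have dh := dV.mul df
  erw [dh.deriv]; rw [hf v]
  -- reduce all rpow's to v^(α-2) and (1-v)^(β-2)
  have h1 : v ^ (α - 1 - 1) = v ^ (α - 2) := by congr 1; ring
  have h2 : v ^ (α - 1) = v ^ (α - 2) * v := by
    rw [← Real.rpow_add_one hne]; congr 1; ring
  have h3 : v ^ α = v ^ (α - 2) * v * v := by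
    rw [← Real.rpow_add_one hne, ← Real.rpow_add_one hne]; congr 1; ring
  have h4 : (1 - v) ^ (β - 1 - 1) = (1 - v) ^ (β - 2) := by congr 1; ring
  have h5 : (1 - v) ^ (β - 1) = (1 - v) ^ (β - 2) * (1 - v) := by
    rw [← Real.rpow_add_one hne1]; congr 1; ring
  have h6 : (1 - v) ^ β = (1 - v) ^ (β - 2) * (1 - v) * (1 - v) := by
    rw [← Real.rpow_add_one hne1, ← Real.rpow_add_one hne1]; congr 1; ring
  rw [h1, h2, h3, h4, h5, h6]
  generalize v ^ (α - 2) = A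
  generalize (1 - v) ^ (β - 2) = B
  subst hα hβ
  have hLa : lam * a ^ 2 ≠ 0 := by positivity
  field_simp
  ring_nf
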